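/- Under the hypotheses of type-D cancellation over a unital dg-algebra A over 𝔽₂ (x ≠ y ∈ G, c_{xy} a unit with d(c_{xy}) = 0), the composite coefficients satisfy (f∘g)_{ab} = Σ_{c∈G} g_{ac} f_{cb} = δ_{ab}·1 for all a, b ∈ G' = G\{x,y}; that is, f ∘ g is the identity morphism on the cancelled structure. -/
import Mathlib


/-- Type-D cancellation over a unital dg-algebra `A` over `𝔽₂`: with
`f_{yb} = c_{xy}⁻¹ c_{xb}`, `f_{bb} = 1` for `b ∈ G' = G \ {x,y}` and
`g_{aa} = 1`, `g_{ax} = c_{ay} c_{xy}⁻¹` for `a ∈ G'` (other coefficients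
zero), the composite satisfies `(f∘g)_{ab} = ∑_{c∈G} g_{ac} f_{cb} = δ_{ab}·1`
for all `a, b ∈ G'`: `f ∘ g` is the identity morphism. -/
theorem typeD_cancellation_f_comp_g
    {A : Type*} [Ring A] [Algebra (ZMod 2) A]
    (d : A →+ A)
    (hleib : ∀ a b : A, d (a * b) = d a * b + a * d b)
    (hd2 : ∀ a : A, d (d a) = 0)
    {G : Type*} [Fintype G] [DecidableEq G]
    (c : G → G → A)
    (hstr : ∀ a b : G, d (c a b) + ∑ e : G, c a e * c e b = 0)
    (x y : G) (hxy : x ≠ y)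
    (u : Aˣ) (hu : (u : A) = c x y) (hdu : d (c x y) = 0) :
    ∀ a b : {g : G // g ≠ x ∧ g ≠ y},
      ∑ e : G,
        ((if (↑a : G) = e then (1 : A) else 0)
            + (if e = x then c ↑a y * ((u⁻¹ : Aˣ) : A) else 0))
          * ((if e = y then ((u⁻¹ : Aˣ) : A) * c x ↑b else 0)
            + (if e = ↑b then 1 else 0))
        = if a = b then 1 else 0 := by
  rintro ⟨a, hax, hay⟩ ⟨b, hbx, hby⟩
  rw [Finset.sum_eq_single a]
  · simp [hay, Subtype.ext_iff, fun h : a = x => hax h]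
  · intro e _ hea
    by_cases hex : e = x
    · subst hex
      simp [hxy, hax, Ne.symm hbx]
    · simp [Ne.symm hea, hex]
  · simp
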